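/- arXiv:2012.04713 — 2 statements merged into one kernel-verified Lean document; each statement's English description precedes it below -/
import Mathlib

section
/- Let a : Equiv.Perm X be such that P a * C = C * P a and P a * B = B * P a. Then for every depth p : ℕ, all parameters β γ : Fin p → ℝ, and every x : X, the depth-p QAOA state ψ satisfies ψ (a x) = ψ x, and hence the measurement probabilities satisfy Pr(x) = Pr(a x). -/
/-- Permutation matrix of a permutation `a` of a finite type `X`:
`(P a) x y = 1` if `x = a y` and `0` otherwise. -/
noncomputable def permMatrix {X : Type*} [Fintype X] [DecidableEq X] (a : Equiv.Perm X) :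
    Matrix X X ℂ :=
  Matrix.of fun x y => if x = a y then 1 else 0

/-- The transverse-field mixing Hamiltonian `B = ∑_j X_j` in the computational basis:
`B x y = 1` if the bitstrings `x` and `y` differ in exactly one coordinate, else `0`. -/
noncomputable def mixerB (n : ℕ) : Matrix (Fin n → Bool) (Fin n → Bool) ℂ :=
  Matrix.of fun x y => if (Finset.univ.filter fun i => x i ≠ y i).card = 1 then 1 else 0

/-- The diagonal objective Hamiltonian `C` of an objective function `f`. -/
noncomputable def objC (n : ℕ) (f : (Fin n → Bool) → ℝ) :
    Matrix (Fin n → Bool) (Fin n → Bool) ℂ :=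
  Matrix.diagonal fun x => (f x : ℂ)

/-- The uniform superposition initial state. -/
noncomputable def uniformState (n : ℕ) : (Fin n → Bool) → ℂ :=
  fun _ => ((1 / Real.sqrt (2 ^ n) : ℝ) : ℂ)

/-- The depth-`p` QAOA state with parameters `β γ : Fin p → ℝ`: the layers
`exp (-i γ_j C)` then `exp (-i β_j B)` are applied to the uniform initial state
in order `j = 1, …, p`. -/
noncomputable def qaoaState (n : ℕ) (f : (Fin n → Bool) → ℝ) (p : ℕ) (β γ : Fin p → ℝ) :
    (Fin n → Bool) → ℂ :=
  (((List.finRange p).map fun j =>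
      NormedSpace.exp ((-(β j : ℂ) * Complex.I) • mixerB n) *
        NormedSpace.exp ((-(γ j : ℂ) * Complex.I) • objC n f)).reverse.prod).mulVec
    (uniformState n)

lemma perm_mulVec {X : Type*} [Fintype X] [DecidableEq X] (a : Equiv.Perm X)
    (v : X → ℂ) (x : X) : (permMatrix a).mulVec v x = v (a⁻¹ x) := by
  simp only [permMatrix, Matrix.mulVec, dotProduct, Matrix.of_apply,
    ite_mul, one_mul, zero_mul]
  have : ∀ y : X, (x = a y) ↔ (y = a⁻¹ x) := by
    intro y; constructor <;> intro h <;> simp [h]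
  simp only [this]
  simp

/-- Theorem 1 (first case): if the permutation matrix of `a` commutes with both the
objective Hamiltonian `C` and the mixer `B`, then for every depth `p`, all parameters,
and every bitstring `x`, the QAOA amplitudes satisfy `ψ (a x) = ψ x`, and hence the
measurement probabilities satisfy `Pr x = Pr (a x)`. -/
theorem qaoa_symmetry (n : ℕ) (f : (Fin n → Bool) → ℝ) (a : Equiv.Perm (Fin n → Bool))
    (hC : permMatrix a * objC n f = objC n f * permMatrix a)
    (hB : permMatrix a * mixerB n = mixerB n * permMatrix a) :
    ∀ (p : ℕ) (β γ : Fin p → ℝ) (x : Fin n → Bool),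
      qaoaState n f p β γ (a x) = qaoaState n f p β γ x ∧
      ‖qaoaState n f p β γ x‖ ^ 2 = ‖qaoaState n f p β γ (a x)‖ ^ 2 := by
  intro p β γ x
  set Pa := permMatrix a with hPa
  set U := ((List.finRange p).map fun j =>
      NormedSpace.exp ((-(β j : ℂ) * Complex.I) • mixerB n) *
        NormedSpace.exp ((-(γ j : ℂ) * Complex.I) • objC n f)).reverse.prod with hU
  have hcomm : Commute Pa U := by
    apply Commute.list_prod_right
    intro m hm
    rw [List.mem_reverse, List.mem_map] at hm
    obtain ⟨j, _, rfl⟩ := hm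
    exact ((Commute.smul_right hB _).exp_right).mul_right
      ((Commute.smul_right hC _).exp_right)
  have hs : Pa.mulVec (uniformState n) = uniformState n := by
    funext y; rw [perm_mulVec]; rfl
  have hfix : Pa.mulVec (qaoaState n f p β γ) = qaoaState n f p β γ := by
    show Pa.mulVec (U.mulVec (uniformState n)) = _
    rw [Matrix.mulVec_mulVec, hcomm.eq, ← Matrix.mulVec_mulVec, hs]; rfl
  have key : ∀ y, qaoaState n f p β γ (a⁻¹ y) = qaoaState n f p β γ y := by
    intro y
    conv_rhs => rw [← hfix]
    rw [perm_mulVec]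
  have h1 : qaoaState n f p β γ (a x) = qaoaState n f p β γ x := by
    have := key (a x); simpa using this.symm
  exact ⟨h1, by rw [h1]⟩
end

section
/- Let S be a set of permutations of X such that for every a ∈ S, the permutation matrix P a commutes with both C and B. Then for every element a of the subgroup Subgroup.closure S of Equiv.Perm X generated by S, every depth p : ℕ, all parameters β γ : Fin p → ℝ, and every x : X, the QAOA measurement probabilities satisfy Pr(x) = Pr(a x); that is, probabilities are the same across all bitstrings in each orbit of the generated symmetry group. -/
/-AUX-/
lemma permMatrix_mul {X : Type*} [Fintype X] [DecidableEq X] (a b : Equiv.Perm X) :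
    permMatrix (a * b) = permMatrix a * permMatrix b := by
  ext x y
  simp [permMatrix, Matrix.mul_apply, Finset.sum_ite_eq, eq_comm]
  congr

lemma permMatrix_one {X : Type*} [Fintype X] [DecidableEq X] :
    permMatrix (1 : Equiv.Perm X) = 1 := by
  ext x y
  simp [permMatrix, Matrix.one_apply]
  congr

lemma permMatrix_inv_mul {X : Type*} [Fintype X] [DecidableEq X] (a : Equiv.Perm X) :
    permMatrix a⁻¹ * permMatrix a = 1 := by
  rw [← permMatrix_mul, inv_mul_cancel, permMatrix_one]

lemma permMatrix_mulVec {X : Type*} [Fintype X] [DecidableEq X] (a : Equiv.Perm X)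
    (v : X → ℂ) : (permMatrix a).mulVec v = fun x => v (a⁻¹ x) := by
  funext x
  simp only [Matrix.mulVec, dotProduct, permMatrix, Matrix.of_apply]
  rw [Finset.sum_eq_single (a⁻¹ x)]
  · simp
  · intro b _ hb
    rw [if_neg, zero_mul]
    intro h
    exact hb (by simp [h])
  · simp

lemma commute_inv_aux {X : Type*} [Fintype X] [DecidableEq X] (a : Equiv.Perm X)
    (M : Matrix X X ℂ) (h : Commute (permMatrix a) M) : Commute (permMatrix a⁻¹) M := by
  have h1 : permMatrix a⁻¹ * permMatrix a = 1 := permMatrix_inv_mul a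
  have h2 : permMatrix a * permMatrix a⁻¹ = 1 := by
    simpa using permMatrix_inv_mul a⁻¹
  calc permMatrix a⁻¹ * M = permMatrix a⁻¹ * M * (permMatrix a * permMatrix a⁻¹) := by
        rw [h2, mul_one]
    _ = permMatrix a⁻¹ * (permMatrix a * M) * permMatrix a⁻¹ := by
        rw [h.eq]; noncomm_ring
    _ = M * permMatrix a⁻¹ := by
        rw [← mul_assoc, h1, one_mul]


/-- Theorem 1 (second case): if every generator `a ∈ S` has a permutation matrix
commuting with both `C` and `B`, then for every element `a` of the generated subgroup
`Subgroup.closure S`, every depth `p`, all parameters, and every bitstring `x`, the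
QAOA measurement probabilities satisfy `Pr x = Pr (a x)`: probabilities are the same
across all bitstrings in each orbit of the generated symmetry group. -/
theorem qaoa_symmetry_closure (n : ℕ) (f : (Fin n → Bool) → ℝ)
    (S : Set (Equiv.Perm (Fin n → Bool)))
    (hC : ∀ a ∈ S, permMatrix a * objC n f = objC n f * permMatrix a)
    (hB : ∀ a ∈ S, permMatrix a * mixerB n = mixerB n * permMatrix a) :
    ∀ a ∈ Subgroup.closure S, ∀ (p : ℕ) (β γ : Fin p → ℝ) (x : Fin n → Bool),
      ‖qaoaState n f p β γ x‖ ^ 2 = ‖qaoaState n f p β γ (a x)‖ ^ 2 := by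
  -- every element of the closure commutes with both C and B
  have key : ∀ a ∈ Subgroup.closure S,
      Commute (permMatrix a) (objC n f) ∧ Commute (permMatrix a) (mixerB n) := by
    intro a ha
    refine Subgroup.closure_induction (fun x hx => ⟨hC x hx, hB x hx⟩) ?_ ?_ ?_ ha
    · constructor <;> simp [permMatrix_one, Commute, SemiconjBy]
    · rintro x y _ _ ⟨hx1, hx2⟩ ⟨hy1, hy2⟩
      exact ⟨by rw [permMatrix_mul]; exact hx1.mul_left hy1,
             by rw [permMatrix_mul]; exact hx2.mul_left hy2⟩
    · rintro x _ ⟨hx1, hx2⟩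
      exact ⟨commute_inv_aux x _ hx1, commute_inv_aux x _ hx2⟩
  -- main invariance: ψ (a⁻¹ x) = ψ x
  have inv_eq : ∀ a ∈ Subgroup.closure S, ∀ (p : ℕ) (β γ : Fin p → ℝ) (x : Fin n → Bool),
      qaoaState n f p β γ (a⁻¹ x) = qaoaState n f p β γ x := by
    intro a ha p β γ x
    obtain ⟨h1, h2⟩ := key a ha
    set M := ((List.finRange p).map fun j =>
      NormedSpace.exp ((-(β j : ℂ) * Complex.I) • mixerB n) *
        NormedSpace.exp ((-(γ j : ℂ) * Complex.I) • objC n f)).reverse.prod with hM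
    have hcomm : Commute (permMatrix a) M := by
      apply Commute.list_prod_right
      intro m hm
      rw [List.mem_reverse, List.mem_map] at hm
      obtain ⟨j, _, rfl⟩ := hm
      exact ((h2.smul_right _).exp_right).mul_right ((h1.smul_right _).exp_right)
    have hs : (permMatrix a).mulVec (uniformState n) = uniformState n := by
      rw [permMatrix_mulVec]; rfl
    have : (permMatrix a).mulVec (qaoaState n f p β γ) = qaoaState n f p β γ := by
      show (permMatrix a).mulVec (M.mulVec (uniformState n)) = _
      rw [Matrix.mulVec_mulVec, hcomm.eq, ← Matrix.mulVec_mulVec, hs]; rfl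
    calc qaoaState n f p β γ (a⁻¹ x)
        = ((permMatrix a).mulVec (qaoaState n f p β γ)) x := by
          rw [permMatrix_mulVec]
      _ = qaoaState n f p β γ x := by rw [this]
  intro a ha p β γ x
  have := inv_eq a⁻¹ (inv_mem ha) p β γ x
  rw [inv_inv] at this
  rw [← this]
end
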